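/- arXiv:1707.08322 — 2 statements merged into one kernel-verified Lean document; each statement's English description precedes it below -/
import Mathlib

section
/- Fix k ∈ {1,…,c}, V ∈ {−1,+1}^{n×c}, S ∈ {0,1}^{n×n}, and the columns of U other than column k, and view L as a function of the real vector u = U_{*k} ∈ ℝ^n. Then for all u, u₀ ∈ ℝ^n, L(u) ≥ L(u₀) + ⟨g(u₀), u − u₀⟩ − (nλ²/(8c²))·‖u − u₀‖², where g(u₀)_i = (λ/c)·Σ_{j=1}^n (S_{ij} − A_{ij}(u₀))·V_{jk} is the gradient of L at u₀ and ‖·‖ is the Euclidean norm. That is, the quadratic surrogate L̃ built at u₀ with curvature matrix H = −(nλ²/(4c²))·I globally lower-bounds L and coincides with L at u₀. -/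
open scoped BigOperators RealInnerProductSpace

/-- The logistic (sigmoid) function. -/
noncomputable def logistic (t : ℝ) : ℝ := 1 / (1 + Real.exp (-t))

lemma logistic_eq (t : ℝ) : logistic t = Real.exp t / (1 + Real.exp t) := by
  unfold logistic
  rw [Real.exp_neg]
  have h1 : (0:ℝ) < Real.exp t := Real.exp_pos t
  field_simp
  ring

lemma hasDerivAt_logistic (t : ℝ) :
    HasDerivAt logistic (Real.exp t / (1 + Real.exp t) ^ 2) t := by
  have hpos : ∀ s : ℝ, (0:ℝ) < 1 + Real.exp s := fun s => by positivity
  have h1 : HasDerivAt (fun s => Real.exp s / (1 + Real.exp s))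
      ((Real.exp t * (1 + Real.exp t) - Real.exp t * Real.exp t) / (1 + Real.exp t) ^ 2) t :=
    (Real.hasDerivAt_exp t).div ((Real.hasDerivAt_exp t).const_add 1) (ne_of_gt (hpos t))
  have heq : (Real.exp t * (1 + Real.exp t) - Real.exp t * Real.exp t) / (1 + Real.exp t) ^ 2
      = Real.exp t / (1 + Real.exp t) ^ 2 := by ring_nf
  rw [heq] at h1
  exact h1.congr_of_eventuallyEq (Filter.Eventually.of_forall fun s => logistic_eq s)

lemma deriv_bound (t : ℝ) : Real.exp t / (1 + Real.exp t) ^ 2 ≤ 1 / 4 := by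
  have h1 : (0:ℝ) < (1 + Real.exp t) ^ 2 := by positivity
  rw [div_le_div_iff₀ h1 (by norm_num)]
  nlinarith [sq_nonneg (1 - Real.exp t), Real.exp_pos t]

lemma logistic_lipschitz (a b : ℝ) : |logistic a - logistic b| ≤ |a - b| / 4 := by
  have hdiff : Differentiable ℝ logistic := fun t => (hasDerivAt_logistic t).differentiableAt
  have hL : LipschitzWith (1/4 : NNReal) logistic := by
    apply lipschitzWith_of_nnnorm_deriv_le hdiff
    intro x
    rw [(hasDerivAt_logistic x).deriv, ← NNReal.coe_le_coe]
    push_cast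
    rw [Real.norm_eq_abs, abs_of_nonneg (by positivity)]
    exact deriv_bound x
  have := hL.dist_le_mul a b
  rw [Real.dist_eq, Real.dist_eq] at this
  push_cast at this
  linarith


lemma log_one_add_exp_taylor (t₀ t : ℝ) :
    Real.log (1 + Real.exp t) ≤
      Real.log (1 + Real.exp t₀) + logistic t₀ * (t - t₀) + (t - t₀) ^ 2 / 8 := by
  set F : ℝ → ℝ := fun s =>
    Real.log (1 + Real.exp t₀) + logistic t₀ * (s - t₀) + (s - t₀) ^ 2 / 8
      - Real.log (1 + Real.exp s) with hF
  have hderiv : ∀ s, HasDerivAt F (logistic t₀ + (s - t₀) / 4 - logistic s) s := by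
    intro s
    have hpos : (0:ℝ) < 1 + Real.exp s := by positivity
    have h1 : HasDerivAt (fun s : ℝ => Real.log (1 + Real.exp s))
        (Real.exp s / (1 + Real.exp s)) s :=
      ((Real.hasDerivAt_exp s).const_add 1).log (ne_of_gt hpos)
    have h2 : HasDerivAt (fun s : ℝ => Real.log (1 + Real.exp t₀) + logistic t₀ * (s - t₀)
        + (s - t₀) ^ 2 / 8) (logistic t₀ + (s - t₀) / 4) s := by
      have ha : HasDerivAt (fun s : ℝ => s - t₀) 1 s := (hasDerivAt_id s).sub_const t₀
      have hb := ((ha.const_mul (logistic t₀)).const_add (Real.log (1 + Real.exp t₀)))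
      have hc := (ha.pow 2).div_const 8
      have := hb.add hc
      refine HasDerivAt.congr_deriv this ?_
      simp
      ring
    have := h2.sub h1
    rw [← logistic_eq s] at this
    exact this
  have hcont : Continuous F := by
    have : Differentiable ℝ F := fun s => (hderiv s).differentiableAt
    exact this.continuous
  have hmono : MonotoneOn F (Set.Ici t₀) := by
    apply monotoneOn_of_deriv_nonneg (convex_Ici t₀)
      hcont.continuousOn
    · intro s _
      exact (hderiv s).differentiableAt.differentiableWithinAt
    · intro s hs
      rw [(hderiv s).deriv]
      have := logistic_lipschitz s t₀
      rw [interior_Ici] at hs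
      have hst : t₀ ≤ s := le_of_lt hs
      have h2 : logistic s - logistic t₀ ≤ (s - t₀) / 4 := by
        have := abs_le.mp (logistic_lipschitz s t₀)
        have h3 : |s - t₀| = s - t₀ := abs_of_nonneg (by linarith)
        rw [h3] at this
        linarith [this.2]
      linarith
  have hanti : AntitoneOn F (Set.Iic t₀) := by
    apply antitoneOn_of_deriv_nonpos (convex_Iic t₀)
      hcont.continuousOn
    · intro s _
      exact (hderiv s).differentiableAt.differentiableWithinAt
    · intro s hs
      rw [(hderiv s).deriv]
      rw [interior_Iic] at hs
      have hst : s ≤ t₀ := le_of_lt hs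
      have h2 : logistic t₀ - logistic s ≤ (t₀ - s) / 4 := by
        have := abs_le.mp (logistic_lipschitz t₀ s)
        have h3 : |t₀ - s| = t₀ - s := abs_of_nonneg (by linarith)
        rw [h3] at this
        linarith [this.2]
      linarith
  have hF0 : F t₀ = 0 := by simp [hF]
  have : 0 ≤ F t := by
    rcases le_total t₀ t with h | h
    · have := hmono (Set.self_mem_Ici) (Set.mem_Ici.mpr h) h
      linarith [hF0 ▸ this]
    · have := hanti (Set.mem_Iic.mpr h) (Set.self_mem_Iic) h
      linarith [hF0 ▸ this]
  simp only [hF] at this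
  linarith

lemma key_pair (s t t₀ : ℝ) :
    (s - logistic t₀) * (t - t₀) - (t - t₀) ^ 2 / 8 ≤
      (s * t - Real.log (1 + Real.exp t)) - (s * t₀ - Real.log (1 + Real.exp t₀)) := by
  nlinarith [log_one_add_exp_taylor t₀ t]


/-- Quadratic minorization of the DLFH objective in one column `u = U_{*k}` of `U`:
`L(u) ≥ L(u₀) + ⟨g(u₀), u − u₀⟩ − (nλ²/(8c²))·‖u − u₀‖²` for all `u, u₀ ∈ ℝ^n`. -/
theorem dlfh_minorization_column_U (n c : ℕ) (hn : 1 ≤ n) (hc : 1 ≤ c)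
    (lam : ℝ) (hlam : 0 < lam) (k : Fin c)
    (U V : Fin n → Fin c → ℝ)
    (hU : ∀ i k', U i k' = 1 ∨ U i k' = -1)
    (hV : ∀ j k', V j k' = 1 ∨ V j k' = -1)
    (S : Fin n → Fin n → ℝ)
    (hS : ∀ i j, S i j = 0 ∨ S i j = 1)
    (Θ : (Fin n → ℝ) → Fin n → Fin n → ℝ)
    (hΘ : ∀ u i j, Θ u i j =
      (lam / c) * (u i * V j k + ∑ k' ∈ Finset.univ.erase k, U i k' * V j k'))
    (L : EuclideanSpace ℝ (Fin n) → ℝ)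
    (hL : ∀ u, L u = ∑ i : Fin n, ∑ j : Fin n,
      (S i j * Θ u i j - Real.log (1 + Real.exp (Θ u i j))))
    (g : EuclideanSpace ℝ (Fin n) → EuclideanSpace ℝ (Fin n))
    (hg : ∀ w i, g w i = (lam / c) * ∑ j : Fin n, (S i j - logistic (Θ w i j)) * V j k) :
    ∀ u u₀ : EuclideanSpace ℝ (Fin n),
      L u₀ + ⟪g u₀, u - u₀⟫ - (n * lam ^ 2 / (8 * c ^ 2)) * ‖u - u₀‖ ^ 2 ≤ L u := by
  intro u u₀
  have hcpos : (0:ℝ) < (c:ℝ) := by exact_mod_cast hc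
  -- inner product and norm as sums
  have hinner : ⟪g u₀, u - u₀⟫ = ∑ i : Fin n, g u₀ i * (u i - u₀ i) := by
    rw [PiLp.inner_apply]
    simp [RCLike.inner_apply]
    exact Finset.sum_congr rfl (fun i _ => mul_comm _ _)
  have hnorm : ‖u - u₀‖ ^ 2 = ∑ i : Fin n, (u i - u₀ i) ^ 2 := by
    rw [EuclideanSpace.norm_eq, Real.sq_sqrt (by positivity)]
    simp [sq_abs]
  rw [hinner, hnorm, hL u, hL u₀]
  -- difference of Θ
  have hΘd : ∀ i j, Θ u i j - Θ u₀ i j = (lam / c) * ((u i - u₀ i) * V j k) := by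
    intro i j
    rw [hΘ, hΘ]
    ring
  -- reduce to sum comparison
  have main : ∀ i : Fin n,
      g u₀ i * (u i - u₀ i) - (n * lam ^ 2 / (8 * c ^ 2)) * (u i - u₀ i) ^ 2 ≤
      ∑ j : Fin n, ((S i j * Θ u i j - Real.log (1 + Real.exp (Θ u i j)))
        - (S i j * Θ u₀ i j - Real.log (1 + Real.exp (Θ u₀ i j)))) := by
    intro i
    have hgi : g u₀ i * (u i - u₀ i)
        = ∑ j : Fin n, (lam / c) * ((S i j - logistic (Θ u₀ i j)) * V j k) * (u i - u₀ i) := by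
      rw [hg, Finset.mul_sum, Finset.sum_mul]
    have hKi : (n * lam ^ 2 / (8 * c ^ 2)) * (u i - u₀ i) ^ 2
        = ∑ _j : Fin n, (lam ^ 2 / (8 * c ^ 2)) * (u i - u₀ i) ^ 2 := by
      rw [Finset.sum_const, Finset.card_univ, Fintype.card_fin, nsmul_eq_mul]
      ring
    rw [hgi, hKi, ← Finset.sum_sub_distrib]
    apply Finset.sum_le_sum
    intro j _
    have hV2 : V j k ^ 2 = 1 := by rcases hV j k with h | h <;> rw [h] <;> norm_num
    have hkey := key_pair (S i j) (Θ u i j) (Θ u₀ i j)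
    have hd := hΘd i j
    calc (lam / c) * ((S i j - logistic (Θ u₀ i j)) * V j k) * (u i - u₀ i)
          - (lam ^ 2 / (8 * c ^ 2)) * (u i - u₀ i) ^ 2
        = (S i j - logistic (Θ u₀ i j)) * (Θ u i j - Θ u₀ i j)
          - (Θ u i j - Θ u₀ i j) ^ 2 / 8 := by
          rw [hd]
          linear_combination (lam ^ 2 * (u i - u₀ i) ^ 2 / (8 * (c:ℝ) ^ 2)) * hV2
      _ ≤ _ := hkey
  calc (∑ i : Fin n, ∑ j : Fin n,
          (S i j * Θ u₀ i j - Real.log (1 + Real.exp (Θ u₀ i j))))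
        + (∑ i : Fin n, g u₀ i * (u i - u₀ i))
        - (n * lam ^ 2 / (8 * c ^ 2)) * ∑ i : Fin n, (u i - u₀ i) ^ 2
      = (∑ i : Fin n, ∑ j : Fin n,
          (S i j * Θ u₀ i j - Real.log (1 + Real.exp (Θ u₀ i j))))
        + ∑ i : Fin n, (g u₀ i * (u i - u₀ i)
          - (n * lam ^ 2 / (8 * c ^ 2)) * (u i - u₀ i) ^ 2) := by
        rw [Finset.sum_sub_distrib, Finset.mul_sum]; ring
    _ ≤ (∑ i : Fin n, ∑ j : Fin n,
          (S i j * Θ u₀ i j - Real.log (1 + Real.exp (Θ u₀ i j))))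
        + ∑ i : Fin n, ∑ j : Fin n,
          ((S i j * Θ u i j - Real.log (1 + Real.exp (Θ u i j)))
          - (S i j * Θ u₀ i j - Real.log (1 + Real.exp (Θ u₀ i j)))) := by
        have := Finset.sum_le_sum (fun i (_ : i ∈ Finset.univ) => main i)
        linarith
    _ = _ := by
        simp only [Finset.sum_sub_distrib]
        ring
end

section
/- Fix k ∈ {1,…,c}, V ∈ {−1,+1}^{n×c}, S ∈ {0,1}^{n×n}, and the columns of U other than column k, and view L as a function of the column u = U_{*k}. Let u₀ ∈ {−1,+1}^n be the current column, let b = g(u₀) + (nλ²/(4c²))·u₀ where g(u₀)_i = (λ/c)·Σ_{j=1}^n (S_{ij} − A_{ij}(u₀))·V_{jk}, and let u' ∈ {−1,+1}^n be any vector satisfying u'_i·b_i = |b_i| for all i (i.e., u' agrees with sign(b) wherever b_i ≠ 0, as in update rule (3)). Then L(u') ≥ L(u₀): the DLFH column update for U never decreases the objective. -/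
open scoped BigOperators

lemma one_add_exp_pos (t : ℝ) : 0 < 1 + Real.exp t := by positivity

lemma hasDerivAt_log1exp (t : ℝ) :
    HasDerivAt (fun z => Real.log (1 + Real.exp z)) (logistic t) t := by
  have h := ((Real.hasDerivAt_exp t).const_add 1).log (by positivity)
  convert h using 1
  unfold logistic
  rw [Real.exp_neg]
  have h1 : Real.exp t ≠ 0 := (Real.exp_pos t).ne'
  field_simp
  ring

lemma hasDerivAt_logistic_s7 (t : ℝ) :
    HasDerivAt logistic (logistic t * (1 - logistic t)) t := by
  have hne : 1 + Real.exp (-t) ≠ 0 := by positivity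
  have h1 : HasDerivAt (fun z : ℝ => Real.exp (-z)) (-Real.exp (-t)) t := by
    have := (Real.hasDerivAt_exp (-t)).comp t (hasDerivAt_neg t)
    simpa [Function.comp_def] using this
  have h := ((h1.const_add 1).inv hne)
  have : HasDerivAt logistic (-(-Real.exp (-t)) / (1 + Real.exp (-t))^2) t := by
    unfold logistic
    simp only [one_div]
    exact h
  convert this using 1
  unfold logistic
  field_simp
  ring

lemma logistic_deriv_le (t : ℝ) : logistic t * (1 - logistic t) ≤ 1/4 := by
  nlinarith [sq_nonneg (logistic t - 1/2)]

lemma logistic_deriv_nonneg (t : ℝ) : 0 ≤ logistic t * (1 - logistic t) := by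
  have h0 : 0 < 1 + Real.exp (-t) := by positivity
  have h1 : 0 < logistic t := by unfold logistic; positivity
  have h2 : logistic t ≤ 1 := by
    unfold logistic
    rw [div_le_one h0]
    nlinarith [Real.exp_pos (-t)]
  nlinarith

lemma logistic_lipschitz_s7 {x y : ℝ} (hxy : x ≤ y) :
    logistic y - logistic x ≤ (1/4) * (y - x) := by
  rcases eq_or_lt_of_le hxy with rfl | h
  · simp
  · have hcont : ContinuousOn logistic (Set.Icc x y) := fun z _ =>
      (hasDerivAt_logistic_s7 z).continuousAt.continuousWithinAt
    obtain ⟨c, _, hc⟩ := exists_hasDerivAt_eq_slope logistic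
      (fun t => logistic t * (1 - logistic t)) h hcont
      (fun z _ => hasDerivAt_logistic_s7 z)
    have h4 := logistic_deriv_le c
    have : (logistic y - logistic x) / (y - x) ≤ 1/4 := hc ▸ h4
    have hyx : 0 < y - x := by linarith
    calc logistic y - logistic x = (logistic y - logistic x) / (y - x) * (y - x) := by
          field_simp
      _ ≤ (1/4) * (y - x) := by nlinarith

lemma log1exp_quad_bound (x y : ℝ) :
    Real.log (1 + Real.exp y) ≤
      Real.log (1 + Real.exp x) + logistic x * (y - x) + (1/8) * (y - x)^2 := by
  set h : ℝ → ℝ := fun z =>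
    Real.log (1 + Real.exp x) + logistic x * (z - x) + (1/8) * (z - x)^2
      - Real.log (1 + Real.exp z) with hh
  have hderiv : ∀ z, HasDerivAt h (logistic x + (1/4) * (z - x) - logistic z) z := by
    intro z
    have h1 : HasDerivAt (fun z : ℝ => Real.log (1 + Real.exp x) + logistic x * (z - x)
        + (1/8) * (z - x)^2) (logistic x + (1/4) * (z - x)) z := by
      have ha : HasDerivAt (fun z : ℝ => logistic x * (z - x)) (logistic x) z := by
        simpa using ((hasDerivAt_id z).sub_const x).const_mul (logistic x)
      have hb : HasDerivAt (fun z : ℝ => (1/8 : ℝ) * (z - x)^2) ((1/4) * (z - x)) z := by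
        have := (((hasDerivAt_id z).sub_const x).pow 2).const_mul (1/8 : ℝ)
        refine (this : HasDerivAt (fun z : ℝ => (1/8 : ℝ) * (z - x)^2) _ z).congr_deriv ?_
        simp
        ring
      simpa [add_assoc] using ((ha.add hb).const_add (Real.log (1 + Real.exp x)))
    exact h1.sub (hasDerivAt_log1exp z)
  have hx0 : h x = 0 := by simp [hh]
  have hcont : ∀ s : Set ℝ, ContinuousOn h s := fun s z _ =>
    (hderiv z).continuousAt.continuousWithinAt
  have key : 0 ≤ h y := by
    rcases lt_trichotomy x y with hlt | rfl | hlt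
    · obtain ⟨c, hc, hceq⟩ := exists_hasDerivAt_eq_slope h
        (fun z => logistic x + (1/4) * (z - x) - logistic z) hlt (hcont _)
        (fun z _ => hderiv z)
      have hcx : x ≤ c := le_of_lt hc.1
      have hlip := logistic_lipschitz_s7 hcx
      have hpos : 0 ≤ (h y - h x) / (y - x) := by
        rw [← hceq]; linarith
      have hyx : 0 < y - x := by linarith
      have := div_nonneg_iff.mp hpos
      rcases this with ⟨h1, _⟩ | ⟨_, h2⟩
      · linarith
      · linarith
    · linarith [hx0]
    · obtain ⟨c, hc, hceq⟩ := exists_hasDerivAt_eq_slope h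
        (fun z => logistic x + (1/4) * (z - x) - logistic z) hlt (hcont _)
        (fun z _ => hderiv z)
      have hcx : c ≤ x := le_of_lt hc.2
      have hlip := logistic_lipschitz_s7 hcx
      have hneg : (h x - h y) / (x - y) ≤ 0 := by
        rw [← hceq]; linarith
      have hxy : 0 < x - y := by linarith
      rcases div_nonpos_iff.mp hneg with ⟨h1, h2⟩ | ⟨h1, _⟩
      · linarith
      · linarith
  simp only [hh] at key
  linarith


/-- The DLFH column update (3) for `U` never decreases the objective: if `u₀` is the
current column of `U`, `b = g(u₀) + (nλ²/(4c²))·u₀`, and `u' ∈ {−1,+1}^n` satisfies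
`u'_i·b_i = |b_i|` for all `i`, then `L(u') ≥ L(u₀)`. -/
theorem dlfh_update_U_ascent (n c : ℕ) (hn : 1 ≤ n) (hc : 1 ≤ c)
    (lam : ℝ) (hlam : 0 < lam) (k : Fin c)
    (U V : Fin n → Fin c → ℝ)
    (hU : ∀ i k', U i k' = 1 ∨ U i k' = -1)
    (hV : ∀ j k', V j k' = 1 ∨ V j k' = -1)
    (S : Fin n → Fin n → ℝ)
    (hS : ∀ i j, S i j = 0 ∨ S i j = 1)
    (Θ : (Fin n → ℝ) → Fin n → Fin n → ℝ)
    (hΘ : ∀ u i j, Θ u i j =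
      (lam / c) * (u i * V j k + ∑ k' ∈ Finset.univ.erase k, U i k' * V j k'))
    (L : (Fin n → ℝ) → ℝ)
    (hL : ∀ u, L u = ∑ i : Fin n, ∑ j : Fin n,
      (S i j * Θ u i j - Real.log (1 + Real.exp (Θ u i j))))
    (u₀ : Fin n → ℝ) (hu₀ : ∀ i, u₀ i = 1 ∨ u₀ i = -1)
    (b : Fin n → ℝ)
    (hb : ∀ i, b i = (lam / c) * (∑ j : Fin n, (S i j - logistic (Θ u₀ i j)) * V j k)
      + (n * lam ^ 2 / (4 * c ^ 2)) * u₀ i)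
    (u' : Fin n → ℝ) (hu' : ∀ i, u' i = 1 ∨ u' i = -1)
    (hmax : ∀ i, u' i * b i = |b i|) :
    L u₀ ≤ L u' := by
  have hc0 : (0:ℝ) < (c:ℝ) := by exact_mod_cast hc
  rw [hL u₀, hL u']
  apply Finset.sum_le_sum
  intro i _
  set d : ℝ := u' i - u₀ i with hd
  set M : ℝ := (n : ℝ) * lam ^ 2 / (4 * (c:ℝ) ^ 2) with hM
  set T : ℝ := ∑ j : Fin n, (S i j - logistic (Θ u₀ i j)) * V j k with hT
  set A : Fin n → ℝ := fun j =>
    (S i j - logistic (Θ u₀ i j)) * ((lam / c) * d * V j k)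
      - (1/8) * ((lam / c) * d)^2 with hA
  -- per-j minorization
  have step : ∀ j ∈ Finset.univ,
      (S i j * Θ u₀ i j - Real.log (1 + Real.exp (Θ u₀ i j))) + A j
        ≤ S i j * Θ u' i j - Real.log (1 + Real.exp (Θ u' i j)) := by
    intro j _
    have hδ : Θ u' i j - Θ u₀ i j = (lam / c) * d * V j k := by
      rw [hΘ, hΘ]; simp only [hd]; ring
    have hV2 : (V j k)^2 = 1 := by rcases hV j k with h | h <;> rw [h] <;> norm_num
    have hδ2 : ((lam / c) * d * V j k)^2 = ((lam / c) * d)^2 := by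
      rw [mul_pow, hV2, mul_one]
    have hq := log1exp_quad_bound (Θ u₀ i j) (Θ u' i j)
    simp only [hA]
    rw [← hδ2, ← hδ]
    nlinarith [hq]
  have hsum := Finset.sum_le_sum step
  rw [Finset.sum_add_distrib] at hsum
  -- the correction sum is nonnegative
  have hAsum : ∑ j : Fin n, A j
      = (lam / c) * d * T - (n : ℝ) * ((1/8) * ((lam / c) * d)^2) := by
    simp only [hA]
    rw [Finset.sum_sub_distrib, Finset.sum_const, Finset.card_univ, Fintype.card_fin,
      nsmul_eq_mul]
    congr 1
    rw [hT, Finset.mul_sum]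
    apply Finset.sum_congr rfl
    intro j _
    ring
  have hsq0 : u₀ i ^ 2 = 1 := by rcases hu₀ i with h | h <;> rw [h] <;> norm_num
  have hsq' : u' i ^ 2 = 1 := by rcases hu' i with h | h <;> rw [h] <;> norm_num
  have hd2 : d ^ 2 = 2 - 2 * (u' i * u₀ i) := by
    simp only [hd]; nlinarith [hsq0, hsq']
  have h1 : (lam / c) * T = b i - M * u₀ i := by rw [hb i, hM]; ring
  have h2 : (n : ℝ) * ((1/8) * ((lam / c) * d)^2) = (M/2) * d^2 := by
    rw [hM]; field_simp; ring
  have hle : u₀ i * b i ≤ |b i| := by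
    rcases hu₀ i with h | h <;> rw [h]
    · simpa using le_abs_self (b i)
    · simpa using neg_le_abs (b i)
  have hkey : (lam / c) * d * T - (n : ℝ) * ((1/8) * ((lam / c) * d)^2)
      = u' i * b i - u₀ i * b i := by
    rw [h2]
    have : (lam / c) * d * T = d * ((lam / c) * T) := by ring
    rw [this, h1]
    linear_combination (-(M/2)) * hd2 + M * hsq0
  have hA0 : 0 ≤ ∑ j : Fin n, A j := by
    rw [hAsum, hkey, hmax i]
    linarith
  linarith
end
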